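/- If −1 < l < 1, m > 0, and 2l − m + 2 > 0, then both complex roots of λ² + (m − l − 1)·λ + l = 0 have modulus strictly less than 1. -/

import Mathlib

theorem stmt5 (m l : ℝ) (hl1 : -1 < l) (hl2 : l < 1) (hm : 0 < m) (hs : 0 < 2 * l - m + 2) :
    ∀ lam : ℂ, lam ^ 2 + ((m : ℂ) - l - 1) * lam + l = 0 → ‖lam‖ < 1 := by
  intro lam h
  set x := lam.re with hx
  set y := lam.im with hy
  have hre : x ^ 2 - y ^ 2 + (m - l - 1) * x + l = 0 := by
    have := congrArg Complex.re h
    simp [pow_two, Complex.add_re, Complex.mul_re, Complex.sub_re, Complex.ofReal_re,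
      Complex.ofReal_im, Complex.sub_im, Complex.one_re, Complex.one_im] at this
    ring_nf at this ⊢
    linarith
  have him : y * (2 * x + (m - l - 1)) = 0 := by
    have := congrArg Complex.im h
    simp [pow_two, Complex.add_im, Complex.mul_im, Complex.sub_re, Complex.sub_im,
      Complex.ofReal_re, Complex.ofReal_im, Complex.one_re, Complex.one_im] at this
    ring_nf at this ⊢
    linarith
  have habs : ‖lam‖ ^ 2 = x ^ 2 + y ^ 2 := by
    rw [Complex.sq_norm, Complex.normSq_apply]; ring
  have hlt : ‖lam‖ ^ 2 < 1 := by
    rcases mul_eq_zero.mp him with h0 | h0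
    · -- real root
      rw [habs, h0]
      rw [h0] at hre
      have hx2 : x ^ 2 + (m - l - 1) * x + l = 0 := by linarith [hre]
      set r := -(m - l - 1) - x with hrdef
      have hxr : x * r = l := by rw [hrdef]; linear_combination -hx2
      have hA : (1 - x) * (1 - r) = m := by rw [hrdef]; linear_combination -hx2
      have hB : (1 + x) * (1 + r) = 2 * l - m + 2 := by rw [hrdef]; linear_combination -hx2
      have key : (1 - x ^ 2) * (1 - r ^ 2) = m * (2 * l - m + 2) := by
        linear_combination (1 + x) * (1 + r) * hA + m * hB
      have hprod : x ^ 2 * r ^ 2 = l ^ 2 := by linear_combination (x * r + l) * hxr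
      have hl2 : l ^ 2 < 1 := by nlinarith
      nlinarith [key, hprod, sq_nonneg r, sq_nonneg x, mul_pos hm hs]
    · -- conjugate pair: x = -(m-l-1)/2, |lam|^2 = l
      have hxv : x = -(m - l - 1) / 2 := by linarith
      have : x ^ 2 + y ^ 2 = l := by nlinarith [hre, hxv]
      rw [habs, this]; exact hl2
  nlinarith [norm_nonneg lam, hlt]
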